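/- arXiv:2602.04852 — 2 statements merged into one kernel-verified Lean document; each statement's English description precedes it below -/
import Mathlib

section
/- Let K ∈ ℝ^{T×d_k} have full column rank and let V ∈ ℝ^{T×d_v} be nonzero, with orthogonal decomposition V = V_∥ + V_⊥ where the columns of V_∥ lie in the column space of K and the columns of V_⊥ are orthogonal to it, and assume V_∥ ≠ 0. Then S := Vᵀ K satisfies er(S) ≥ er(V_∥) / κ(K)², where er denotes effective rank and κ the spectral ℓ² condition number. -/
open Matrix BigOperators

/-- Squared Frobenius norm of a real matrix. -/
noncomputable def frobSq {m n : Type*} [Fintype m] [Fintype n] (A : Matrix m n ℝ) : ℝ :=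
  ∑ i, ∑ j, A i j ^ 2

/-- Spectral norm (ℓ²-operator norm) of a real matrix. -/
noncomputable def specNorm {m n : Type*} [Fintype m] [Fintype n] [DecidableEq n]
    (A : Matrix m n ℝ) : ℝ :=
  ‖LinearMap.toContinuousLinearMap (Matrix.toEuclideanLin A)‖

/-- Effective rank (stable rank) `er(A) = ‖A‖_F² / ‖A‖_2²`. -/
noncomputable def effRank {m n : Type*} [Fintype m] [Fintype n] [DecidableEq n]
    (A : Matrix m n ℝ) : ℝ :=
  frobSq A / specNorm A ^ 2

/-- The singular values of `A`: square roots of the eigenvalues of `AᵀA`. -/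
noncomputable def singVals {m n : Type*} [Fintype m] [Fintype n] [DecidableEq n]
    (A : Matrix m n ℝ) : n → ℝ :=
  fun i => Real.sqrt ((show (Aᵀ * A).IsHermitian by
    simpa using Matrix.isHermitian_conjTranspose_mul_self A).eigenvalues i)

/-- The largest singular value `σ_max`. -/
noncomputable def sigmaMax {m n : Type*} [Fintype m] [Fintype n] [DecidableEq n]
    (A : Matrix m n ℝ) : ℝ :=
  sSup (Set.range (singVals A))

/-- The smallest singular value `σ_min`. -/
noncomputable def sigmaMin {m n : Type*} [Fintype m] [Fintype n] [DecidableEq n]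
    (A : Matrix m n ℝ) : ℝ :=
  sInf (Set.range (singVals A))

/-- The ℓ² (spectral) condition number `κ(A) = σ_max(A) / σ_min(A)`. -/
noncomputable def condNum {m n : Type*} [Fintype m] [Fintype n] [DecidableEq n]
    (A : Matrix m n ℝ) : ℝ :=
  sigmaMax A / sigmaMin A

/-! ### Auxiliary lemmas -/

lemma spec_coords {n T : ℕ} (K : Matrix (Fin T) (Fin n) ℝ) (x : Fin n → ℝ) :
    ∃ y : Fin n → ℝ,
      x ⬝ᵥ x = ∑ i, y i ^ 2 ∧
      x ⬝ᵥ ((Kᵀ * K) *ᵥ x) = ∑ i, ((show (Kᵀ * K).IsHermitian by simpa using Matrix.isHermitian_conjTranspose_mul_self K)).eigenvalues i * y i ^ 2 ∧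
      ((Kᵀ * K) *ᵥ x) ⬝ᵥ ((Kᵀ * K) *ᵥ x) = ∑ i, (((show (Kᵀ * K).IsHermitian by simpa using Matrix.isHermitian_conjTranspose_mul_self K)).eigenvalues i) ^ 2 * y i ^ 2 := by
  classical
  set M := Kᵀ * K with hMdef
  have hM : M.IsHermitian := (show (Kᵀ * K).IsHermitian by simpa using Matrix.isHermitian_conjTranspose_mul_self K)
  set ev := hM.eigenvalues with hev
  set U : Matrix (Fin n) (Fin n) ℝ := (hM.eigenvectorUnitary : Matrix (Fin n) (Fin n) ℝ) with hU
  have hsU : star U = Uᵀ := by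
    simp [Matrix.star_eq_conjTranspose, Matrix.conjTranspose_eq_transpose_of_trivial]
  have hU1 : U * Uᵀ = 1 := by
    rw [← hsU]; exact (Matrix.mem_unitaryGroup_iff).mp hM.eigenvectorUnitary.2
  have hU2 : Uᵀ * U = 1 := by
    rw [← hsU]; exact (Matrix.mem_unitaryGroup_iff').mp hM.eigenvectorUnitary.2
  have hspec : M = U * Matrix.diagonal ev * Uᵀ := by
    have h := hM.spectral_theorem
    rw [Unitary.conjStarAlgAut_apply, hsU] at h
    simpa [RCLike.ofReal_real_eq_id] using h
  set y : Fin n → ℝ := Uᵀ *ᵥ x with hy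
  have key : ∀ z w : Fin n → ℝ, (U *ᵥ z) ⬝ᵥ (U *ᵥ w) = z ⬝ᵥ w := by
    intro z w
    rw [dotProduct_mulVec, Matrix.vecMul_mulVec, hU2, Matrix.vecMul_one]
  have hMx : M *ᵥ x = U *ᵥ (Matrix.diagonal ev *ᵥ y) := by
    rw [hspec, hy, Matrix.mulVec_mulVec, Matrix.mulVec_mulVec]
  have hxy : x ⬝ᵥ (U *ᵥ (Matrix.diagonal ev *ᵥ y)) = y ⬝ᵥ (Matrix.diagonal ev *ᵥ y) := by
    have : x = U *ᵥ y := by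
      rw [hy, Matrix.mulVec_mulVec, hU1, Matrix.one_mulVec]
    conv_lhs => rw [this]
    exact key _ _
  refine ⟨y, ?_, ?_, ?_⟩
  · have : x = U *ᵥ y := by rw [hy, Matrix.mulVec_mulVec, hU1, Matrix.one_mulVec]
    rw [this, key]
    simp [dotProduct, sq]
  · rw [hMx, hxy]
    simp [dotProduct, Matrix.mulVec_diagonal, sq]
    ring_nf
    exact Finset.sum_congr rfl fun i _ => by ring
  · rw [hMx, key]
    simp [dotProduct, Matrix.mulVec_diagonal]
    exact Finset.sum_congr rfl fun i _ => by ring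

lemma euc_norm_sq {n : Type*} [Fintype n] (x : EuclideanSpace ℝ n) :
    ‖x‖ ^ 2 = ∑ i, x i ^ 2 := by
  rw [EuclideanSpace.norm_eq, Real.sq_sqrt (by positivity)]
  simp [sq_abs]

lemma specNorm_nonneg' {m n : Type*} [Fintype m] [Fintype n] [DecidableEq n]
    (A : Matrix m n ℝ) : 0 ≤ specNorm A := norm_nonneg _

lemma mulVec_dot_le {m n : Type*} [Fintype m] [Fintype n] [DecidableEq n]
    (A : Matrix m n ℝ) (x : n → ℝ) :
    (A *ᵥ x) ⬝ᵥ (A *ᵥ x) ≤ specNorm A ^ 2 * (x ⬝ᵥ x) := by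
  classical
  have h := (LinearMap.toContinuousLinearMap (Matrix.toEuclideanLin A)).le_opNorm
      ((WithLp.equiv 2 (n → ℝ)).symm x)
  have h1 : ‖(LinearMap.toContinuousLinearMap (Matrix.toEuclideanLin A))
      ((WithLp.equiv 2 (n → ℝ)).symm x)‖ ^ 2 = (A *ᵥ x) ⬝ᵥ (A *ᵥ x) := by
    rw [LinearMap.coe_toContinuousLinearMap', euc_norm_sq]
    simp [Matrix.toEuclideanLin_apply, dotProduct, sq]
  have h2 : ‖(WithLp.equiv 2 (n → ℝ)).symm x‖ ^ 2 = x ⬝ᵥ x := by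
    rw [euc_norm_sq]; simp [dotProduct, sq]
  have := mul_self_le_mul_self (norm_nonneg _) h
  calc (A *ᵥ x) ⬝ᵥ (A *ᵥ x) = _ ^ 2 := h1.symm
    _ ≤ (specNorm A * ‖(WithLp.equiv 2 (n → ℝ)).symm x‖) ^ 2 := by
        rw [sq, sq]; exact this
    _ = specNorm A ^ 2 * (x ⬝ᵥ x) := by rw [mul_pow, h2]

lemma specNorm_le_of_bound {m n : Type*} [Fintype m] [Fintype n] [DecidableEq n]
    (A : Matrix m n ℝ) (c : ℝ) (hc : 0 ≤ c)
    (h : ∀ x : n → ℝ, (A *ᵥ x) ⬝ᵥ (A *ᵥ x) ≤ c ^ 2 * (x ⬝ᵥ x)) :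
    specNorm A ≤ c := by
  classical
  apply ContinuousLinearMap.opNorm_le_bound _ hc
  intro x
  have h1 : ‖(LinearMap.toContinuousLinearMap (Matrix.toEuclideanLin A)) x‖ ^ 2
      = (A *ᵥ (WithLp.equiv 2 (n → ℝ) x)) ⬝ᵥ (A *ᵥ (WithLp.equiv 2 (n → ℝ) x)) := by
    rw [LinearMap.coe_toContinuousLinearMap', euc_norm_sq]
    simp [Matrix.toEuclideanLin_apply, dotProduct, sq]
  have h2 : ‖x‖ ^ 2 = (WithLp.equiv 2 (n → ℝ) x) ⬝ᵥ (WithLp.equiv 2 (n → ℝ) x) := by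
    rw [euc_norm_sq]; simp [dotProduct, sq]
  have hle : ‖(LinearMap.toContinuousLinearMap (Matrix.toEuclideanLin A)) x‖ ^ 2
      ≤ (c * ‖x‖) ^ 2 := by
    rw [h1, mul_pow, h2]; exact h _
  calc ‖(LinearMap.toContinuousLinearMap (Matrix.toEuclideanLin A)) x‖
      = Real.sqrt (‖(LinearMap.toContinuousLinearMap (Matrix.toEuclideanLin A)) x‖ ^ 2) :=
        (Real.sqrt_sq (norm_nonneg _)).symm
    _ ≤ Real.sqrt ((c * ‖x‖) ^ 2) := Real.sqrt_le_sqrt hle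
    _ = c * ‖x‖ := Real.sqrt_sq (by positivity)

lemma specNorm_mul_le {m n k : Type*} [Fintype m] [Fintype n] [Fintype k]
    [DecidableEq n] [DecidableEq k]
    (A : Matrix m n ℝ) (B : Matrix n k ℝ) :
    specNorm (A * B) ≤ specNorm A * specNorm B := by
  classical
  apply specNorm_le_of_bound _ _ (mul_nonneg (specNorm_nonneg' _) (specNorm_nonneg' _))
  intro x
  rw [← Matrix.mulVec_mulVec]
  calc (A *ᵥ (B *ᵥ x)) ⬝ᵥ (A *ᵥ (B *ᵥ x)) ≤ specNorm A ^ 2 * ((B *ᵥ x) ⬝ᵥ (B *ᵥ x)) :=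
        mulVec_dot_le _ _
    _ ≤ specNorm A ^ 2 * (specNorm B ^ 2 * (x ⬝ᵥ x)) := by
        apply mul_le_mul_of_nonneg_left (mulVec_dot_le _ _) (by positivity)
    _ = (specNorm A * specNorm B) ^ 2 * (x ⬝ᵥ x) := by ring

lemma specNorm_transpose' {m n : Type*} [Fintype m] [Fintype n] [DecidableEq m] [DecidableEq n]
    (A : Matrix m n ℝ) : specNorm Aᵀ = specNorm A := by
  classical
  have h : Aᵀ = Aᴴ := (Matrix.conjTranspose_eq_transpose_of_trivial A).symm
  rw [h]
  have := Matrix.toEuclideanLin_conjTranspose_eq_adjoint A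
  unfold specNorm
  rw [this, LinearMap.adjoint_toContinuousLinearMap]
  exact (LinearIsometryEquiv.norm_map ContinuousLinearMap.adjoint _)

lemma specNorm_eq_zero_iff' {m n : Type*} [Fintype m] [Fintype n] [DecidableEq n]
    (A : Matrix m n ℝ) : specNorm A = 0 ↔ A = 0 := by
  constructor
  · intro h
    unfold specNorm at h
    have h0 : LinearMap.toContinuousLinearMap (Matrix.toEuclideanLin A) = 0 := by
      rwa [norm_eq_zero] at h
    have h2 : Matrix.toEuclideanLin A = 0 := LinearMap.toContinuousLinearMap.injective
      (by rw [h0, map_zero])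
    have hA0 : Matrix.toEuclideanLin A = Matrix.toEuclideanLin (0 : Matrix m n ℝ) := by
      rw [h2, map_zero]
    exact Matrix.toEuclideanLin.injective hA0
  · intro h; subst h
    unfold specNorm
    rw [map_zero, map_zero, norm_zero]

lemma dot_KtK {n T : ℕ} (K : Matrix (Fin T) (Fin n) ℝ) (x : Fin n → ℝ) :
    (K *ᵥ x) ⬝ᵥ (K *ᵥ x) = x ⬝ᵥ ((Kᵀ * K) *ᵥ x) := by
  rw [dotProduct_mulVec (K *ᵥ x), Matrix.vecMul_mulVec,
    dotProduct_mulVec x]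

lemma frobSq_nonneg {m n : Type*} [Fintype m] [Fintype n] (A : Matrix m n ℝ) :
    0 ≤ frobSq A := by
  unfold frobSq; positivity

/-! ### Main theorem -/

/-- Proposition: effective rank of the associative memory:
if `K` has full column rank, `V = V∥ + V⊥` with the columns of `V∥` in the column
space of `K` and the columns of `V⊥` orthogonal to it, and `V∥ ≠ 0`, then
`er(Vᵀ K) ≥ er(V∥) / κ(K)²`. -/
theorem effRank_memory_lower_bound {T dk dv : ℕ}
    (K : Matrix (Fin T) (Fin dk) ℝ) (hK : K.rank = dk)
    (V Vpar Vperp : Matrix (Fin T) (Fin dv) ℝ) (hV : V ≠ 0)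
    (hdecomp : V = Vpar + Vperp)
    (hpar : ∀ j : Fin dv,
      (fun i => Vpar i j) ∈ Submodule.span ℝ (Set.range Kᵀ))
    (hperp : Vperpᵀ * K = 0)
    (hVpar : Vpar ≠ 0) :
    effRank Vpar / condNum K ^ 2 ≤ effRank (Vᵀ * K) := by
  classical
  have hRHS0 : 0 ≤ effRank (Vᵀ * K) :=
    div_nonneg (frobSq_nonneg _) (sq_nonneg _)
  rcases Nat.eq_zero_or_pos dk with hdk | hdk
  · subst hdk
    have hempty : Set.range (singVals K) = ∅ := Set.range_eq_empty _
    have : condNum K = 0 := by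
      unfold condNum sigmaMin
      rw [hempty, Real.sInf_empty, div_zero]
    rw [this]
    norm_num
    exact hRHS0
  -- main case
  haveI : Nonempty (Fin dk) := ⟨⟨0, hdk⟩⟩
  have hM : (Kᵀ * K).IsHermitian := (show (Kᵀ * K).IsHermitian by simpa using Matrix.isHermitian_conjTranspose_mul_self K)
  set ev : Fin dk → ℝ := ((show (Kᵀ * K).IsHermitian by simpa using Matrix.isHermitian_conjTranspose_mul_self K)).eigenvalues with hev
  -- eigenvalues are nonnegative
  have hev_nonneg : ∀ i, 0 ≤ ev i := fun i =>
    Matrix.eigenvalues_conjTranspose_mul_self_nonneg K i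
  -- eigenvalues are nonzero (full rank)
  have hrank : (Kᵀ * K).rank = dk := by rw [Matrix.rank_transpose_mul_self, hK]
  have hcard : Fintype.card {i // ev i ≠ 0} = dk := by
    rw [← Matrix.IsHermitian.rank_eq_card_non_zero_eigs hM] at *
    exact hrank
  have hev_ne : ∀ i, ev i ≠ 0 := by
    intro i hi
    have hlt : Fintype.card {j // ev j ≠ 0} < Fintype.card (Fin dk) :=
      Fintype.card_subtype_lt (x := i) (by simpa using hi)
    rw [hcard, Fintype.card_fin] at hlt
    exact lt_irrefl _ hlt
  have hev_pos : ∀ i, 0 < ev i := fun i => lt_of_le_of_ne (hev_nonneg i) (Ne.symm (hev_ne i))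
  obtain ⟨i0, hi0⟩ := Finite.exists_max ev
  obtain ⟨i1, hi1⟩ := Finite.exists_min ev
  set a := ev i1 with ha_def
  set b := ev i0 with hb_def
  have ha : 0 < a := hev_pos i1
  have hb : 0 < b := hev_pos i0
  -- sigmaMax and sigmaMin
  have hsmax : sigmaMax K = Real.sqrt b := by
    apply IsGreatest.csSup_eq
    exact ⟨⟨i0, rfl⟩, by rintro v ⟨i, rfl⟩; exact Real.sqrt_le_sqrt (hi0 i)⟩
  have hsmin : sigmaMin K = Real.sqrt a := by
    apply IsLeast.csInf_eq
    exact ⟨⟨i1, rfl⟩, by rintro v ⟨i, rfl⟩; exact Real.sqrt_le_sqrt (hi1 i)⟩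
  -- spectral norm of K is at most sqrt b
  have hKnorm : specNorm K ≤ Real.sqrt b := by
    apply specNorm_le_of_bound _ _ (Real.sqrt_nonneg b)
    intro x
    obtain ⟨y, hy1, hy2, _⟩ := spec_coords K x
    rw [dot_KtK, hy2, Real.sq_sqrt hb.le, hy1, Finset.mul_sum]
    apply Finset.sum_le_sum
    intro i _
    exact mul_le_mul_of_nonneg_right (hi0 i) (sq_nonneg _)
  -- S = Vᵀ K = Vparᵀ K
  have hS : Vᵀ * K = Vparᵀ * K := by
    rw [hdecomp, Matrix.transpose_add, Matrix.add_mul, hperp, add_zero]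
  -- Frobenius lower bound
  have hfrob_row : ∀ j : Fin dv,
      a * ((fun i => Vpar i j) ⬝ᵥ (fun i => Vpar i j))
        ≤ ∑ i, (Vparᵀ * K) j i ^ 2 := by
    intro j
    set v : Fin T → ℝ := fun i => Vpar i j with hv
    have hmem : v ∈ LinearMap.range K.mulVecLin := by
      rw [Matrix.range_mulVecLin]; exact hpar j
    obtain ⟨w, hw⟩ := hmem
    have hrow : ∀ i, (Vparᵀ * K) j i = ((Kᵀ * K) *ᵥ w) i := by
      intro i
      have : Kᵀ *ᵥ v = (Kᵀ * K) *ᵥ w := by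
        rw [← hw]; simp [Matrix.mulVec_mulVec, Matrix.mulVecLin_apply]
      rw [← this]
      simp [Matrix.mul_apply, Matrix.mulVec, dotProduct, hv, Matrix.transpose_apply,
        mul_comm]
    obtain ⟨y, hy1, hy2, hy3⟩ := spec_coords K w
    have hvv : v ⬝ᵥ v = ∑ i, ev i * y i ^ 2 := by
      have h1 : v ⬝ᵥ v = (K *ᵥ w) ⬝ᵥ (K *ᵥ w) := by
        rw [← hw]; simp [Matrix.mulVecLin_apply]
      rw [h1, dot_KtK, hy2]
    have hsum : ∑ i, (Vparᵀ * K) j i ^ 2 = ∑ i, (ev i) ^ 2 * y i ^ 2 := by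
      rw [← hy3]
      simp only [dotProduct]
      apply Finset.sum_congr rfl
      intro i _
      rw [hrow i, sq]
    rw [hsum, hvv, Finset.mul_sum]
    apply Finset.sum_le_sum
    intro i _
    have : a * ev i ≤ ev i ^ 2 := by
      rw [sq]
      exact mul_le_mul_of_nonneg_right (hi1 i) (hev_nonneg i)
    calc a * (ev i * y i ^ 2) = (a * ev i) * y i ^ 2 := by ring
      _ ≤ ev i ^ 2 * y i ^ 2 := mul_le_mul_of_nonneg_right this (sq_nonneg _)
  have hVparFrob : frobSq Vpar
      = ∑ j : Fin dv, ((fun i => Vpar i j) ⬝ᵥ (fun i => Vpar i j)) := by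
    unfold frobSq
    rw [Finset.sum_comm]
    simp [dotProduct, sq]
  have hfrob : a * frobSq Vpar ≤ frobSq (Vparᵀ * K) := by
    rw [hVparFrob, Finset.mul_sum]
    exact Finset.sum_le_sum fun j _ => hfrob_row j
  -- positivity facts
  obtain ⟨i', j', hij⟩ : ∃ i j, Vpar i j ≠ 0 := by
    by_contra h
    push_neg at h
    exact hVpar (Matrix.ext fun i j => by simpa using h i j)
  have hfrobpos : 0 < frobSq Vpar := by
    calc (0:ℝ) < Vpar i' j' ^ 2 := by positivity
      _ ≤ ∑ j, Vpar i' j ^ 2 :=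
        Finset.single_le_sum (f := fun j => Vpar i' j ^ 2)
          (fun _ _ => sq_nonneg _) (Finset.mem_univ j')
      _ ≤ frobSq Vpar := by
        unfold frobSq
        exact Finset.single_le_sum (f := fun i => ∑ j, Vpar i j ^ 2)
          (fun _ _ => by positivity) (Finset.mem_univ i')
  have hNpos : 0 < specNorm Vpar :=
    lt_of_le_of_ne (specNorm_nonneg' _)
      (fun h => hVpar ((specNorm_eq_zero_iff' _).mp h.symm))
  have hSfrobpos : 0 < frobSq (Vparᵀ * K) :=
    lt_of_lt_of_le (by positivity) hfrob
  have hSne : Vparᵀ * K ≠ 0 := by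
    intro h
    rw [h] at hSfrobpos
    simp [frobSq] at hSfrobpos
  have hSpos : 0 < specNorm (Vparᵀ * K) :=
    lt_of_le_of_ne (specNorm_nonneg' _)
      (fun h => hSne ((specNorm_eq_zero_iff' _).mp h.symm))
  have hSnorm : specNorm (Vparᵀ * K) ≤ specNorm Vpar * Real.sqrt b :=
    calc specNorm (Vparᵀ * K) ≤ specNorm Vparᵀ * specNorm K := specNorm_mul_le _ _
      _ = specNorm Vpar * specNorm K := by rw [specNorm_transpose']
      _ ≤ specNorm Vpar * Real.sqrt b :=
          mul_le_mul_of_nonneg_left hKnorm (specNorm_nonneg' _)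
  have hSnormSq : specNorm (Vparᵀ * K) ^ 2 ≤ specNorm Vpar ^ 2 * b := by
    have h := pow_le_pow_left₀ (specNorm_nonneg' _) hSnorm 2
    rwa [mul_pow, Real.sq_sqrt hb.le] at h
  have hcond : condNum K ^ 2 = b / a := by
    unfold condNum
    rw [hsmax, hsmin, div_pow, Real.sq_sqrt hb.le, Real.sq_sqrt ha.le]
  have hLHS : effRank Vpar / condNum K ^ 2
      = frobSq Vpar * a / (specNorm Vpar ^ 2 * b) := by
    rw [hcond]
    unfold effRank
    rw [div_div_div_eq]
  rw [hS, hLHS]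
  unfold effRank
  apply div_le_div₀ (frobSq_nonneg _) ?_ (by positivity) hSnormSq
  rw [mul_comm] at hfrob
  exact hfrob
end

section
/- Let T ∈ O(d_k) be an orthogonal matrix and let β_t ∈ ℝ, k_t, q_t ∈ ℝ^{d_k}, v_t ∈ ℝ^{d_v} for t = 1,…,T. Define the DeltaNet recurrence S_t = S_{t-1}(I − β_t k_t k_tᵀ) + β_t v_t k_tᵀ with S_0 = 0 and outputs o_t = S_t q_t, and the transformed recurrence S̃_t = S̃_{t-1}(I − β_t (Tk_t)(Tk_t)ᵀ) + β_t v_t (Tk_t)ᵀ with S̃_0 = 0 and outputs õ_t = S̃_t (Tq_t). Then S̃_t = S_t Tᵀ and õ_t = o_t for all t. -/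
open Matrix BigOperators

lemma vecMulVec_mulVec_both {n : ℕ} (T : Matrix (Fin n) (Fin n) ℝ)
    (k : Fin n → ℝ) :
    Matrix.vecMulVec (T.mulVec k) (T.mulVec k) = T * Matrix.vecMulVec k k * Tᵀ := by
  rw [Matrix.vecMulVec_eq Unit, Matrix.vecMulVec_eq Unit, Matrix.replicateCol_mulVec,
    Matrix.replicateRow_mulVec, Matrix.transpose_mul, Matrix.transpose_replicateCol]
  simp [Matrix.mul_assoc]

lemma vecMulVec_mulVec_right {n m : ℕ} (T : Matrix (Fin n) (Fin n) ℝ)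
    (v : Fin m → ℝ) (k : Fin n → ℝ) :
    Matrix.vecMulVec v (T.mulVec k) = Matrix.vecMulVec v k * Tᵀ := by
  rw [Matrix.vecMulVec_eq Unit, Matrix.vecMulVec_eq Unit, Matrix.replicateRow_mulVec,
    Matrix.transpose_mul, Matrix.transpose_replicateCol, Matrix.mul_assoc]

/-- Orthogonal invariance of DeltaNet sequence mixing:
for an orthogonal `T`, the recurrence run on transformed keys `T k_t` and read out
with transformed queries `T q_t` satisfies `S̃_t = S_t Tᵀ` and produces the same
outputs `õ_t = o_t`. -/
theorem deltanet_orthogonal_invariance {dv dk : ℕ}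
    (T : Matrix (Fin dk) (Fin dk) ℝ) (hT₁ : Tᵀ * T = 1) (hT₂ : T * Tᵀ = 1)
    (β : ℕ → ℝ) (k q : ℕ → Fin dk → ℝ) (v : ℕ → Fin dv → ℝ)
    (S Stil : ℕ → Matrix (Fin dv) (Fin dk) ℝ)
    (hS0 : S 0 = 0) (hStil0 : Stil 0 = 0)
    (hrec : ∀ t : ℕ, 1 ≤ t →
      S t = S (t - 1) * ((1 : Matrix (Fin dk) (Fin dk) ℝ)
              - β t • Matrix.vecMulVec (k t) (k t))
            + β t • Matrix.vecMulVec (v t) (k t))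
    (hrectil : ∀ t : ℕ, 1 ≤ t →
      Stil t = Stil (t - 1) * ((1 : Matrix (Fin dk) (Fin dk) ℝ)
              - β t • Matrix.vecMulVec (T.mulVec (k t)) (T.mulVec (k t)))
            + β t • Matrix.vecMulVec (v t) (T.mulVec (k t))) :
    ∀ t : ℕ, Stil t = S t * Tᵀ ∧
      (Stil t).mulVec (T.mulVec (q t)) = (S t).mulVec (q t) := by
  have key : ∀ t : ℕ, Stil t = S t * Tᵀ := by
    intro t
    induction t with
    | zero => simp [hS0, hStil0]
    | succ n ih =>
      have h1 := hrec (n + 1) (Nat.le_add_left 1 n)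
      have h2 := hrectil (n + 1) (Nat.le_add_left 1 n)
      simp only [Nat.add_sub_cancel] at h1 h2
      rw [h2, ih, h1, vecMulVec_mulVec_both, vecMulVec_mulVec_right]
      have : (1 : Matrix (Fin dk) (Fin dk) ℝ)
          - β (n + 1) • (T * Matrix.vecMulVec (k (n + 1)) (k (n + 1)) * Tᵀ)
          = T * ((1 : Matrix (Fin dk) (Fin dk) ℝ)
              - β (n + 1) • Matrix.vecMulVec (k (n + 1)) (k (n + 1))) * Tᵀ := by
        rw [Matrix.mul_sub, Matrix.sub_mul, Matrix.mul_one, hT₂,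
          Matrix.mul_smul, Matrix.smul_mul]
      rw [this, Matrix.add_mul, Matrix.smul_mul]
      congr 1
      rw [← Matrix.mul_assoc, ← Matrix.mul_assoc, Matrix.mul_assoc (S n) Tᵀ T, hT₁,
        Matrix.mul_one]
  intro t
  refine ⟨key t, ?_⟩
  rw [key t, Matrix.mulVec_mulVec, Matrix.mul_assoc, hT₁, Matrix.mul_one]
end
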